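/- Let H be a weak Hopf algebra and A a left-left Yetter–Drinfeld module over H which is simultaneously a left H-module algebra and a left H-comodule algebra. Then on the smash product A # H the map λ(a # h) = a⁽⁻¹⁾h₁ ⊗ (a⁽⁰⁾ # h₂) is well-defined on A ⊗_{H_t} H, i.e. λ(a # zh) = λ(a(z·1_A) # h) for all z ∈ H_t. -/
import Mathlib


open TensorProduct LinearMap

/-- A weak Hopf algebra over a commutative ring `k`: a `k`-algebra `H` equipped with a
coassociative counital comultiplication which is multiplicative, satisfying the weak
comultiplication axiom `Δ²(1) = (Δ(1)⊗1)(1⊗Δ(1)) = (1⊗Δ(1))(Δ(1)⊗1)`, the weak counit axiom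
`ε(xyz) = ε(xy₁)ε(y₂z) = ε(xy₂)ε(y₁z)`, and an antipode satisfying
`h₁S(h₂) = ε(1₁h)1₂`, `S(h₁)h₂ = 1₁ε(h1₂)` and `S(h₁)h₂S(h₃) = S(h)`. -/
structure WeakHopfAlgebra (k H : Type*) [CommRing k] [Ring H] [Algebra k H] where
  comul : H →ₗ[k] H ⊗[k] H
  counit : H →ₗ[k] k
  antipode : H →ₗ[k] H
  comul_coassoc : (TensorProduct.assoc k H H H).toLinearMap ∘ₗ
      (LinearMap.rTensor H comul) ∘ₗ comul = (LinearMap.lTensor H comul) ∘ₗ comul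
  counit_comul : (TensorProduct.lid k H).toLinearMap ∘ₗ
      (LinearMap.rTensor H counit) ∘ₗ comul = LinearMap.id
  comul_counit : (TensorProduct.rid k H).toLinearMap ∘ₗ
      (LinearMap.lTensor H counit) ∘ₗ comul = LinearMap.id
  comul_mul : ∀ x y : H, comul (x * y) = comul x * comul y
  comul_one_left : (LinearMap.rTensor H comul) (comul 1)
      = (comul 1 ⊗ₜ[k] (1 : H)) * ((TensorProduct.assoc k H H H).symm ((1 : H) ⊗ₜ[k] comul 1))
  comul_one_right : (LinearMap.rTensor H comul) (comul 1)
      = ((TensorProduct.assoc k H H H).symm ((1 : H) ⊗ₜ[k] comul 1)) * (comul 1 ⊗ₜ[k] (1 : H))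
  counit_mul_left : ∀ x y z : H, counit (x * y * z)
      = LinearMap.mul' k k ((TensorProduct.map (counit ∘ₗ LinearMap.mulLeft k x)
          (counit ∘ₗ LinearMap.mulRight k z)) (comul y))
  counit_mul_right : ∀ x y z : H, counit (x * y * z)
      = LinearMap.mul' k k ((TensorProduct.map (counit ∘ₗ LinearMap.mulRight k z)
          (counit ∘ₗ LinearMap.mulLeft k x)) (comul y))
  antipode_right : ∀ h : H,
      LinearMap.mul' k H ((LinearMap.lTensor H antipode) (comul h))
        = (TensorProduct.lid k H) ((LinearMap.rTensor H
            (counit ∘ₗ LinearMap.mulRight k h)) (comul 1))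
  antipode_left : ∀ h : H,
      LinearMap.mul' k H ((LinearMap.rTensor H antipode) (comul h))
        = (TensorProduct.rid k H) ((LinearMap.lTensor H
            (counit ∘ₗ LinearMap.mulLeft k h)) (comul 1))
  antipode_mid : ∀ h : H,
      LinearMap.mul' k H ((TensorProduct.map
          (LinearMap.mul' k H ∘ₗ LinearMap.rTensor H antipode) antipode)
            ((LinearMap.rTensor H comul) (comul h))) = antipode h

namespace WeakHopfAlgebra

variable {k H : Type*} [CommRing k] [Ring H] [Algebra k H]

/-- The target map `ε_t(h) = ε(1₁h)1₂`. -/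
noncomputable def εt (W : WeakHopfAlgebra k H) : H →ₗ[k] H :=
  (TensorProduct.lid k H).toLinearMap ∘ₗ (LinearMap.rTensor H W.counit) ∘ₗ
    (LinearMap.mulLeft k (W.comul 1)) ∘ₗ ((TensorProduct.mk k H H).flip 1)

/-- The source map `ε_s(h) = 1₁ε(h1₂)`. -/
noncomputable def εs (W : WeakHopfAlgebra k H) : H →ₗ[k] H :=
  (TensorProduct.rid k H).toLinearMap ∘ₗ (LinearMap.lTensor H W.counit) ∘ₗ
    (LinearMap.mulRight k (W.comul 1)) ∘ₗ ((TensorProduct.mk k H H) 1)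

end WeakHopfAlgebra

namespace WeakHopfAlgebra

variable {k H : Type*} [CommRing k] [Ring H] [Algebra k H]

/-- The subspace of relations defining the relative tensor product `A ⊗_{H_t} H`
underlying the smash product `A # H`: it is spanned by the elements
`(a·z) ⊗ h - a ⊗ (zh)` for `z ∈ H_t`, where `a·z := a (z·1_A)`. -/
noncomputable def smashRel (W : WeakHopfAlgebra k H) {A : Type*} [AddCommGroup A] [Module k A]
    (mulA : A →ₗ[k] A →ₗ[k] A) (oneA : A) (act : H →ₗ[k] A →ₗ[k] A) :
    Submodule k (A ⊗[k] H) :=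
  Submodule.span k {x | ∃ (a : A) (h z : H), z ∈ Set.range W.εt ∧
    x = (mulA a (act z oneA)) ⊗ₜ[k] h - a ⊗ₜ[k] (z * h)}

end WeakHopfAlgebra

section Rep

variable {k : Type*} [CommRing k]
variable {M N : Type*} [AddCommGroup M] [Module k M] [AddCommGroup N] [Module k N]

theorem exists_fin_rep (x : M ⊗[k] N) :
    ∃ (n : ℕ) (f : Fin n → M) (g : Fin n → N), x = ∑ i, f i ⊗ₜ[k] g i := by
  induction x with
  | zero => exact ⟨0, ![], ![], by simp⟩
  | tmul m n => exact ⟨1, ![m], ![n], by simp⟩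
  | add x y hx hy =>
    obtain ⟨n₁, f₁, g₁, h₁⟩ := hx
    obtain ⟨n₂, f₂, g₂, h₂⟩ := hy
    refine ⟨n₁ + n₂, Fin.append f₁ f₂, Fin.append g₁ g₂, ?_⟩
    rw [Fin.sum_univ_add]
    simp [h₁, h₂]

theorem uniform_fin_rep (n : ℕ) (x : Fin n → M ⊗[k] N) :
    ∃ (K : ℕ) (f : Fin n → Fin K → M) (g : Fin n → Fin K → N),
      ∀ j, x j = ∑ r, f j r ⊗ₜ[k] g j r := by
  choose K f g hfg using fun j => exists_fin_rep (x j)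
  refine ⟨Finset.univ.sup K,
    fun j r => if h : (r : ℕ) < K j then f j ⟨r, h⟩ else 0,
    fun j r => if h : (r : ℕ) < K j then g j ⟨r, h⟩ else 0, fun j => ?_⟩
  have hK : K j ≤ Finset.univ.sup K := Finset.le_sup (Finset.mem_univ j)
  rw [hfg j]
  set φ : ℕ → M ⊗[k] N :=
    fun m => if h : m < K j then f j ⟨m, h⟩ ⊗ₜ[k] g j ⟨m, h⟩ else 0 with hφ
  calc (∑ r : Fin (K j), f j r ⊗ₜ[k] g j r)
      = ∑ r : Fin (K j), φ (r : ℕ) := Finset.sum_congr rfl (fun r _ => by simp [hφ])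
    _ = ∑ m ∈ Finset.range (K j), φ m := Fin.sum_univ_eq_sum_range φ (K j)
    _ = ∑ m ∈ Finset.range (Finset.univ.sup K), φ m :=
        Finset.sum_subset (Finset.range_subset_range.2 hK)
          (fun m _ hm => dif_neg (by simpa using hm))
    _ = ∑ r : Fin (Finset.univ.sup K), φ (r : ℕ) :=
        (Fin.sum_univ_eq_sum_range φ _).symm
    _ = _ := Finset.sum_congr rfl
        (fun r _ => by by_cases h : (r : ℕ) < K j <;> simp [hφ, h])

end Rep

namespace WeakHopfAlgebra

variable {k H : Type*} [CommRing k] [Ring H] [Algebra k H]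

theorem εt_rep (W : WeakHopfAlgebra k H) {n : ℕ} {e1 e2 : Fin n → H}
    (he : W.comul 1 = ∑ j, e1 j ⊗ₜ[k] e2 j) (u : H) :
    W.εt u = ∑ j, W.counit (e1 j * u) • e2 j := by
  simp only [εt, LinearMap.comp_apply, LinearEquiv.coe_coe, LinearMap.flip_apply,
    TensorProduct.mk_apply, LinearMap.mulLeft_apply]
  rw [he, Finset.sum_mul]
  simp [Algebra.TensorProduct.tmul_mul_tmul]

theorem εs_rep (W : WeakHopfAlgebra k H) {n : ℕ} {e1 e2 : Fin n → H}
    (he : W.comul 1 = ∑ j, e1 j ⊗ₜ[k] e2 j) (u : H) :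
    W.εs u = ∑ j, W.counit (u * e2 j) • e1 j := by
  simp only [εs, LinearMap.comp_apply, LinearEquiv.coe_coe,
    TensorProduct.mk_apply, LinearMap.mulRight_apply]
  rw [he, Finset.mul_sum]
  simp [Algebra.TensorProduct.tmul_mul_tmul]

theorem comul_one_exp_left (W : WeakHopfAlgebra k H) {n : ℕ} {e1 e2 : Fin n → H}
    (he : W.comul 1 = ∑ j, e1 j ⊗ₜ[k] e2 j) :
    LinearMap.rTensor H W.comul (W.comul 1)
      = ∑ j, ∑ j', (e1 j ⊗ₜ[k] (e2 j * e1 j')) ⊗ₜ[k] e2 j' := by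
  rw [W.comul_one_left, he]
  simp only [tmul_sum, sum_tmul, map_sum, TensorProduct.assoc_symm_tmul,
    Finset.sum_mul_sum, Algebra.TensorProduct.tmul_mul_tmul, one_mul, mul_one]

theorem comul_one_exp_right (W : WeakHopfAlgebra k H) {n : ℕ} {e1 e2 : Fin n → H}
    (he : W.comul 1 = ∑ j, e1 j ⊗ₜ[k] e2 j) :
    LinearMap.rTensor H W.comul (W.comul 1)
      = ∑ j, ∑ j', (e1 j ⊗ₜ[k] (e1 j' * e2 j)) ⊗ₜ[k] e2 j' := by
  rw [W.comul_one_right, he]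
  simp only [tmul_sum, sum_tmul, map_sum, TensorProduct.assoc_symm_tmul,
    Finset.sum_mul_sum, Algebra.TensorProduct.tmul_mul_tmul, one_mul, mul_one]
  exact Finset.sum_comm

theorem lcoassoc_one (W : WeakHopfAlgebra k H) :
    LinearMap.lTensor H W.comul (W.comul 1)
      = TensorProduct.assoc k H H H (LinearMap.rTensor H W.comul (W.comul 1)) := by
  have := LinearMap.congr_fun W.comul_coassoc (1 : H)
  simpa [LinearMap.comp_apply] using this.symm

theorem comul_εt (W : WeakHopfAlgebra k H) (w : H) :
    W.comul (W.εt w) = W.comul 1 * (W.εt w ⊗ₜ[k] (1 : H)) := by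
  obtain ⟨n, e1, e2, he⟩ := exists_fin_rep (W.comul 1)
  have h1 : LinearMap.lTensor H W.comul (W.comul 1)
      = ∑ j, e1 j ⊗ₜ[k] W.comul (e2 j) := by
    conv_lhs => rw [he]
    simp [map_sum]
  have h2 : LinearMap.lTensor H W.comul (W.comul 1)
      = ∑ j, ∑ j', e1 j ⊗ₜ[k] ((e1 j' * e2 j) ⊗ₜ[k] e2 j') := by
    rw [W.lcoassoc_one, W.comul_one_exp_right he]
    simp [map_sum, assoc_tmul]
  set Θ : H ⊗[k] (H ⊗[k] H) →ₗ[k] H ⊗[k] H :=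
    (TensorProduct.lid k (H ⊗[k] H)).toLinearMap ∘ₗ
      LinearMap.rTensor (H ⊗[k] H) (W.counit ∘ₗ LinearMap.mulRight k w) with hΘdef
  have hΘ : ∀ (x : H) (y : H ⊗[k] H), Θ (x ⊗ₜ[k] y) = W.counit (x * w) • y := by
    intro x y
    simp [hΘdef]
  have key := congrArg Θ (h1.symm.trans h2)
  simp only [map_sum, hΘ] at key
  calc W.comul (W.εt w) = ∑ j, W.counit (e1 j * w) • W.comul (e2 j) := by
        rw [W.εt_rep he w, map_sum]
        simp
    _ = ∑ j, ∑ j', W.counit (e1 j * w) • ((e1 j' * e2 j) ⊗ₜ[k] e2 j') := key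
    _ = ∑ j', (e1 j' * W.εt w) ⊗ₜ[k] e2 j' := by
        rw [Finset.sum_comm]
        refine Finset.sum_congr rfl fun j' _ => ?_
        rw [W.εt_rep he w, Finset.mul_sum, sum_tmul]
        refine Finset.sum_congr rfl fun j _ => ?_
        rw [mul_smul_comm, smul_tmul']
    _ = W.comul 1 * (W.εt w ⊗ₜ[k] (1 : H)) := by
        rw [he, Finset.sum_mul]
        simp [Algebra.TensorProduct.tmul_mul_tmul]

theorem comul_εt' (W : WeakHopfAlgebra k H) (w : H) :
    W.comul (W.εt w) = (W.εt w ⊗ₜ[k] (1 : H)) * W.comul 1 := by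
  obtain ⟨n, e1, e2, he⟩ := exists_fin_rep (W.comul 1)
  have h1 : LinearMap.lTensor H W.comul (W.comul 1)
      = ∑ j, e1 j ⊗ₜ[k] W.comul (e2 j) := by
    conv_lhs => rw [he]
    simp [map_sum]
  have h2 : LinearMap.lTensor H W.comul (W.comul 1)
      = ∑ j, ∑ j', e1 j ⊗ₜ[k] ((e2 j * e1 j') ⊗ₜ[k] e2 j') := by
    rw [W.lcoassoc_one, W.comul_one_exp_left he]
    simp [map_sum, assoc_tmul]
  set Θ : H ⊗[k] (H ⊗[k] H) →ₗ[k] H ⊗[k] H :=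
    (TensorProduct.lid k (H ⊗[k] H)).toLinearMap ∘ₗ
      LinearMap.rTensor (H ⊗[k] H) (W.counit ∘ₗ LinearMap.mulRight k w) with hΘdef
  have hΘ : ∀ (x : H) (y : H ⊗[k] H), Θ (x ⊗ₜ[k] y) = W.counit (x * w) • y := by
    intro x y
    simp [hΘdef]
  have key := congrArg Θ (h1.symm.trans h2)
  simp only [map_sum, hΘ] at key
  calc W.comul (W.εt w) = ∑ j, W.counit (e1 j * w) • W.comul (e2 j) := by
        rw [W.εt_rep he w, map_sum]
        simp
    _ = ∑ j, ∑ j', W.counit (e1 j * w) • ((e2 j * e1 j') ⊗ₜ[k] e2 j') := key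
    _ = ∑ j', (W.εt w * e1 j') ⊗ₜ[k] e2 j' := by
        rw [Finset.sum_comm]
        refine Finset.sum_congr rfl fun j' _ => ?_
        rw [W.εt_rep he w, Finset.sum_mul, sum_tmul]
        refine Finset.sum_congr rfl fun j _ => ?_
        rw [smul_mul_assoc, smul_tmul']
    _ = (W.εt w ⊗ₜ[k] (1 : H)) * W.comul 1 := by
        rw [he, Finset.mul_sum]
        simp [Algebra.TensorProduct.tmul_mul_tmul]

theorem εt_εs_comm (W : WeakHopfAlgebra k H) (w v : H) :
    W.εt w * W.εs v = W.εs v * W.εt w := by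
  obtain ⟨n, e1, e2, he⟩ := exists_fin_rep (W.comul 1)
  set Ω : (H ⊗[k] H) ⊗[k] H →ₗ[k] H :=
    (TensorProduct.rid k H).toLinearMap ∘ₗ
      TensorProduct.map
        ((TensorProduct.lid k H).toLinearMap ∘ₗ
          LinearMap.rTensor H (W.counit ∘ₗ LinearMap.mulRight k w))
        (W.counit ∘ₗ LinearMap.mulLeft k v) with hΩdef
  have hΩ : ∀ (x y z : H), Ω ((x ⊗ₜ[k] y) ⊗ₜ[k] z)
      = W.counit (v * z) • (W.counit (x * w) • y) := by
    intro x y z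
    simp [hΩdef, smul_smul, mul_comm]
  have key := congrArg Ω ((W.comul_one_exp_left he).symm.trans (W.comul_one_exp_right he))
  simp only [map_sum, hΩ] at key
  calc W.εt w * W.εs v
      = ∑ j, ∑ j', W.counit (v * e2 j') • (W.counit (e1 j * w) • (e2 j * e1 j')) := by
        rw [W.εt_rep he w, W.εs_rep he v, Finset.sum_mul_sum]
        refine Finset.sum_congr rfl fun j _ => Finset.sum_congr rfl fun j' _ => ?_
        rw [smul_mul_assoc, mul_smul_comm, smul_comm]
    _ = ∑ j, ∑ j', W.counit (v * e2 j') • (W.counit (e1 j * w) • (e1 j' * e2 j)) := key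
    _ = W.εs v * W.εt w := by
        rw [W.εs_rep he v, W.εt_rep he w, Finset.sum_mul_sum, Finset.sum_comm]
        refine Finset.sum_congr rfl fun j _ => Finset.sum_congr rfl fun j' _ => ?_
        rw [smul_mul_assoc, mul_smul_comm]

end WeakHopfAlgebra

open WeakHopfAlgebra in
/-- Let `H` be a weak Hopf algebra and `A` a left-left Yetter–Drinfeld module over `H` which is
simultaneously a left `H`-module algebra and a left `H`-comodule algebra.  Then on the smash
product `A # H = A ⊗_{H_t} H` the map `λ(a # h) = a⁽⁻¹⁾h₁ ⊗ (a⁽⁰⁾ # h₂)` is well defined,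
i.e. `λ(a # zh) = λ(a(z·1_A) # h)` for all `z ∈ H_t`. -/
theorem weakHopf_smash_left_coaction_well_defined
    {k H : Type*} [CommRing k] [Ring H] [Algebra k H]
    (W : WeakHopfAlgebra k H) {A : Type*} [Ring A] [Algebra k A]
    (act : H →ₗ[k] A →ₗ[k] A) (coact : A →ₗ[k] H ⊗[k] A)
    -- `A` is a left `H`-module algebra:
    (hact_mul : ∀ (h h' : H) (a : A), act (h * h') a = act h (act h' a))
    (hact_one : ∀ a : A, act 1 a = a)
    (hma_mul : ∀ (h : H) (a b : A) (n : ℕ) (h1 h2 : Fin n → H),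
      W.comul h = ∑ i, h1 i ⊗ₜ[k] h2 i →
      act h (a * b) = ∑ i, act (h1 i) a * act (h2 i) b)
    (hma_one : ∀ h : H, act h 1 = act (W.εt h) 1)
    -- `A` is a left `H`-comodule:
    (hcoassoc : (LinearMap.lTensor H coact) ∘ₗ coact
      = (TensorProduct.assoc k H H A).toLinearMap ∘ₗ (LinearMap.rTensor A W.comul) ∘ₗ coact)
    (hcounit : (TensorProduct.lid k A).toLinearMap ∘ₗ (LinearMap.rTensor A W.counit) ∘ₗ coact
      = LinearMap.id)
    -- `A` is a left `H`-comodule algebra: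
    (hca_mul : ∀ (a b : A) (N N' : ℕ) (a1 : Fin N → H) (a0 : Fin N → A)
        (b1 : Fin N' → H) (b0 : Fin N' → A),
      coact a = ∑ i, a1 i ⊗ₜ[k] a0 i → coact b = ∑ j, b1 j ⊗ₜ[k] b0 j →
      coact (a * b) = ∑ i, ∑ j, (a1 i * b1 j) ⊗ₜ[k] (a0 i * b0 j))
    (hca_one : coact (1 : A) = (LinearMap.rTensor A W.εs) (coact 1))
    -- `(A, act, coact)` is a left-left Yetter–Drinfeld module:
    (hwyd1 : ∀ (a : A) (n N : ℕ) (e1 e2 : Fin n → H) (a1 : Fin N → H) (a0 : Fin N → A),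
      W.comul 1 = ∑ j, e1 j ⊗ₜ[k] e2 j → coact a = ∑ i, a1 i ⊗ₜ[k] a0 i →
      coact a = ∑ i, ∑ j, (e1 j * a1 i) ⊗ₜ[k] act (e2 j) (a0 i))
    (hwyd2 : ∀ (h : H) (a : A) (n N K : ℕ) (h1 h2 : Fin n → H)
        (p1 : Fin n → Fin K → H) (p0 : Fin n → Fin K → A)
        (a1 : Fin N → H) (a0 : Fin N → A),
      W.comul h = ∑ i, h1 i ⊗ₜ[k] h2 i →
      (∀ i, coact (act (h1 i) a) = ∑ r, p1 i r ⊗ₜ[k] p0 i r) →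
      coact a = ∑ j, a1 j ⊗ₜ[k] a0 j →
      ∑ i, ∑ r, (p1 i r * h2 i) ⊗ₜ[k] p0 i r
        = ∑ i, ∑ j, (h1 i * a1 j) ⊗ₜ[k] act (h2 i) (a0 j)) :
    -- conclusion: `λ(a # zh) = λ(a(z·1_A) # h)` for `z ∈ H_t`:
    ∀ (a : A) (h z : H), z ∈ Set.range W.εt →
      ∀ (N n N' n' : ℕ) (a1 : Fin N → H) (a0 : Fin N → A) (u1 u2 : Fin n → H)
        (c1 : Fin N' → H) (c0 : Fin N' → A) (h1 h2 : Fin n' → H),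
      coact a = ∑ i, a1 i ⊗ₜ[k] a0 i →
      W.comul (z * h) = ∑ j, u1 j ⊗ₜ[k] u2 j →
      coact (a * act z 1) = ∑ i, c1 i ⊗ₜ[k] c0 i →
      W.comul h = ∑ j, h1 j ⊗ₜ[k] h2 j →
      (∑ i, ∑ j, (a1 i * u1 j) ⊗ₜ[k]
          (W.smashRel (LinearMap.mul k A) (1 : A) act).mkQ (a0 i ⊗ₜ[k] u2 j))
        = ∑ i, ∑ j, (c1 i * h1 j) ⊗ₜ[k]
          (W.smashRel (LinearMap.mul k A) (1 : A) act).mkQ (c0 i ⊗ₜ[k] h2 j) := by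
  intro a h z hz N n N' n' a1 a0 u1 u2 c1 c0 h1 h2 ha hzh hc hh
  obtain ⟨w, rfl⟩ := hz
  set Q := (W.smashRel (LinearMap.mul k A) (1 : A) act).mkQ with hQ
  set Ψ : (H ⊗[k] A) ⊗[k] (H ⊗[k] H) →ₗ[k]
      H ⊗[k] (A ⊗[k] H ⧸ W.smashRel (LinearMap.mul k A) (1 : A) act) :=
    (TensorProduct.map (LinearMap.mul' k H) Q) ∘ₗ
      (TensorProduct.tensorTensorTensorComm k H A H H).toLinearMap with hΨ
  have hΨt : ∀ (x : H) (b : A) (u v : H),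
      Ψ ((x ⊗ₜ[k] b) ⊗ₜ[k] (u ⊗ₜ[k] v)) = (x * u) ⊗ₜ[k] Q (b ⊗ₜ[k] v) := by
    intro x b u v
    simp [hΨ, tensorTensorTensorComm_tmul, mul'_apply]
  have Ψsum : ∀ (m p : ℕ) (f1 : Fin m → H) (f2 : Fin m → A) (g1 : Fin p → H)
      (g2 : Fin p → H),
      Ψ ((∑ i, f1 i ⊗ₜ[k] f2 i) ⊗ₜ[k] (∑ j, g1 j ⊗ₜ[k] g2 j))
        = ∑ i, ∑ j, (f1 i * g1 j) ⊗ₜ[k] Q (f2 i ⊗ₜ[k] g2 j) := by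
    intro m p f1 f2 g1 g2
    rw [sum_tmul, map_sum]
    refine Finset.sum_congr rfl fun i _ => ?_
    rw [tmul_sum, map_sum]
    exact Finset.sum_congr rfl fun j _ => hΨt _ _ _ _
  have coact_mul : ∀ x y : A, coact (x * y) = coact x * coact y := by
    intro x y
    obtain ⟨p, x1, x0, hx⟩ := exists_fin_rep (coact x)
    obtain ⟨q, y1, y0, hy⟩ := exists_fin_rep (coact y)
    rw [hca_mul x y p q x1 x0 y1 y0 hx hy, hx, hy, Finset.sum_mul_sum]
    simp [Algebra.TensorProduct.tmul_mul_tmul]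
  obtain ⟨n0, e1, e2, he⟩ := exists_fin_rep (W.comul 1)
  obtain ⟨N0, m1, m0, hm⟩ := exists_fin_rep (coact (1 : A))
  have hm' : coact (1 : A) = ∑ i, W.εs (m1 i) ⊗ₜ[k] m0 i := by
    conv_lhs => rw [hca_one, hm]
    simp [map_sum]
  have W2 : ∀ b : A,
      (∑ j, coact (act (e1 j) b) * (e2 j ⊗ₜ[k] (1 : A))) = coact b := by
    intro b
    obtain ⟨Nb, b1, b0, hb⟩ := exists_fin_rep (coact b)
    obtain ⟨K, p1, p0, hp⟩ := uniform_fin_rep n0 (fun j => coact (act (e1 j) b))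
    calc (∑ j, coact (act (e1 j) b) * (e2 j ⊗ₜ[k] (1 : A)))
        = ∑ j, ∑ r, (p1 j r * e2 j) ⊗ₜ[k] p0 j r := by
          refine Finset.sum_congr rfl fun j _ => ?_
          rw [hp j, Finset.sum_mul]
          simp [Algebra.TensorProduct.tmul_mul_tmul]
      _ = ∑ i, ∑ j, (e1 i * b1 j) ⊗ₜ[k] act (e2 i) (b0 j) :=
          hwyd2 1 b n0 Nb K e1 e2 p1 p0 b1 b0 he hp hb
      _ = coact b := by
          rw [hwyd1 b n0 Nb e1 e2 b1 b0 he hb]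
          exact Finset.sum_comm
  have hz1 : W.comul (W.εt w) = ∑ j, (e1 j * W.εt w) ⊗ₜ[k] e2 j := by
    rw [W.comul_εt w, he, Finset.sum_mul]
    simp [Algebra.TensorProduct.tmul_mul_tmul]
  obtain ⟨K', q1, q0, hq⟩ :=
    uniform_fin_rep n0 (fun j => coact (act (e1 j * W.εt w) (1 : A)))
  have hE := hwyd2 (W.εt w) 1 n0 N0 K' (fun j => e1 j * W.εt w) e2 q1 q0
    (fun i => W.εs (m1 i)) m0 hz1 hq hm'
  have lemma3 : coact (act (W.εt w) 1) = coact 1 * ((W.εt w) ⊗ₜ[k] (1 : A)) := by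
    calc coact (act (W.εt w) 1)
        = ∑ j, coact (act (e1 j) (act (W.εt w) 1)) * (e2 j ⊗ₜ[k] (1 : A)) :=
          (W2 _).symm
      _ = ∑ j, coact (act (e1 j * W.εt w) 1) * (e2 j ⊗ₜ[k] (1 : A)) := by
          simp only [hact_mul]
      _ = ∑ i, ∑ r, (q1 i r * e2 i) ⊗ₜ[k] q0 i r := by
          refine Finset.sum_congr rfl fun j _ => ?_
          rw [hq j, Finset.sum_mul]
          simp [Algebra.TensorProduct.tmul_mul_tmul]
      _ = ∑ i, ∑ j, ((e1 i * W.εt w) * W.εs (m1 j)) ⊗ₜ[k] act (e2 i) (m0 j) := hE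
      _ = (∑ i, ∑ j, (e1 i * W.εs (m1 j)) ⊗ₜ[k] act (e2 i) (m0 j))
            * ((W.εt w) ⊗ₜ[k] (1 : A)) := by
          rw [Finset.sum_mul]
          refine Finset.sum_congr rfl fun i _ => ?_
          rw [Finset.sum_mul]
          refine Finset.sum_congr rfl fun j _ => ?_
          rw [Algebra.TensorProduct.tmul_mul_tmul, mul_one]
          congr 1
          rw [mul_assoc, mul_assoc, W.εt_εs_comm]
      _ = coact 1 * ((W.εt w) ⊗ₜ[k] (1 : A)) := by
          congr 1
          rw [hwyd1 1 n0 N0 e1 e2 (fun i => W.εs (m1 i)) m0 he hm']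
          exact Finset.sum_comm
  have key : coact (a * act (W.εt w) 1) = coact a * ((W.εt w) ⊗ₜ[k] (1 : A)) := by
    rw [coact_mul, lemma3, ← mul_assoc, ← coact_mul, mul_one]
  have comul_zh : W.comul (W.εt w * h) = ((W.εt w) ⊗ₜ[k] (1 : H)) * W.comul h := by
    rw [W.comul_mul, W.comul_εt' w, mul_assoc, ← W.comul_mul, one_mul]
  have swap : ∀ (X : H ⊗[k] A) (Y : H ⊗[k] H),
      Ψ (X ⊗ₜ[k] (((W.εt w) ⊗ₜ[k] (1 : H)) * Y))
        = Ψ ((X * ((W.εt w) ⊗ₜ[k] (1 : A))) ⊗ₜ[k] Y) := by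
    intro X Y
    induction X using TensorProduct.induction_on with
    | zero => simp
    | tmul x b =>
      induction Y using TensorProduct.induction_on with
      | zero => simp
      | tmul u v =>
        rw [Algebra.TensorProduct.tmul_mul_tmul, Algebra.TensorProduct.tmul_mul_tmul,
          hΨt, hΨt, one_mul, mul_one, mul_assoc]
      | add Y1 Y2 hY1 hY2 =>
        rw [mul_add, tmul_add, map_add, hY1, hY2, ← map_add, ← tmul_add]
    | add X1 X2 hX1 hX2 =>
      rw [add_mul, add_tmul, map_add, hX1, hX2, ← map_add, ← add_tmul]
  calc (∑ i, ∑ j, (a1 i * u1 j) ⊗ₜ[k] Q (a0 i ⊗ₜ[k] u2 j))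
      = Ψ (coact a ⊗ₜ[k] W.comul (W.εt w * h)) := by
        rw [ha, hzh, Ψsum]
    _ = Ψ ((coact a * ((W.εt w) ⊗ₜ[k] (1 : A))) ⊗ₜ[k] W.comul h) := by
        rw [comul_zh, swap]
    _ = Ψ (coact (a * act (W.εt w) 1) ⊗ₜ[k] W.comul h) := by rw [key]
    _ = ∑ i, ∑ j, (c1 i * h1 j) ⊗ₜ[k] Q (c0 i ⊗ₜ[k] h2 j) := by
        rw [hc, hh, Ψsum]
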